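/- For every integer p ≥ 1, Θ_p equals the set of all vectors of the form (2^{t_1}/M, 2^{t_2}/M, …, 2^{t_{r−1}}/M, 1/M, 0, …, 0), where 1 ≤ r ≤ p, t_1 > t_2 > ⋯ > t_{r−1} > 0 are integers, M = 2^{t_1} + 2^{t_2} + ⋯ + 2^{t_{r−1}} + 1 (an odd integer), and the vector is padded with p − r trailing zeros. -/

import Mathlib

open Filter Topology

/-- Membership in the set `Θ_p`: there is an infinite collection of integers
`N = 2^{n_1} + ⋯ + 2^{n_p}` with `n_1 > ⋯ > n_p ≥ 0` along which `2^{n_i}/N → θ i`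
for each `i`. -/
def MemTheta {p : ℕ} (θ : Fin p → ℝ) : Prop :=
  ∃ m : ℕ → Fin p → ℕ,
    (∀ k, StrictAnti (m k)) ∧
    Tendsto (fun k => ∑ i : Fin p, 2 ^ (m k i)) atTop atTop ∧
    ∀ i : Fin p,
      Tendsto (fun k => (2 : ℝ) ^ (m k i) / ∑ j : Fin p, (2 : ℝ) ^ (m k j)) atTop (𝓝 (θ i))

/-- The function `H(θ; s) = ∑_k θ_k^s (2(2^s − 1) ∑_{j>k} θ_j + θ_k)`. -/
noncomputable def Hfun {p : ℕ} (θ : Fin p → ℝ) (s : ℝ) : ℝ :=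
  ∑ k : Fin p,
    θ k ^ s * (2 * ((2 : ℝ) ^ s - 1) * (∑ j ∈ Finset.univ.filter (fun j => k < j), θ j) + θ k)


lemma eventually_const_of_tendsto_pow (f : ℕ → ℕ) (L : ℝ) (hL : 0 < L)
    (h : Tendsto (fun k => ((2:ℝ)^(f k))⁻¹) atTop (𝓝 L)) :
    ∃ a : ℕ, (∀ᶠ k in atTop, f k = a) ∧ L = ((2:ℝ)^a)⁻¹ := by
  have hmem : ∀ᶠ k in atTop, ((2:ℝ)^(f k))⁻¹ ∈ Set.Ioo (2*L/3) (4*L/3) := by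
    apply h.eventually
    apply Ioo_mem_nhds <;> nlinarith
  rw [eventually_atTop] at hmem
  obtain ⟨K, hK⟩ := hmem
  have key : ∀ k ≥ K, f k = f K := by
    intro k hk
    by_contra hne
    have h1 := hK k hk
    have h2 := hK K le_rfl
    rcases Nat.lt_or_ge (f k) (f K) with hlt | hge
    · have : (2:ℝ)^(f k) * 2 ≤ 2^(f K) := by
        calc (2:ℝ)^(f k) * 2 = 2^(f k + 1) := by ring
        _ ≤ 2^(f K) := by apply pow_le_pow_right₀ (by norm_num); omega
      have p1 : (0:ℝ) < 2^(f k) := by positivity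
      have p2 : (0:ℝ) < 2^(f K) := by positivity
      have : ((2:ℝ)^(f K))⁻¹ * 2 ≤ ((2:ℝ)^(f k))⁻¹ := by
        rw [inv_eq_one_div, inv_eq_one_div, div_mul_eq_mul_div, div_le_div_iff₀ p2 p1]
        nlinarith
      obtain ⟨ha1, ha2⟩ := h1; obtain ⟨hb1, hb2⟩ := h2
      nlinarith
    · have hlt : f K < f k := by omega
      have : (2:ℝ)^(f K) * 2 ≤ 2^(f k) := by
        calc (2:ℝ)^(f K) * 2 = 2^(f K + 1) := by ring
        _ ≤ 2^(f k) := by apply pow_le_pow_right₀ (by norm_num); omega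
      have p1 : (0:ℝ) < 2^(f k) := by positivity
      have p2 : (0:ℝ) < 2^(f K) := by positivity
      have : ((2:ℝ)^(f k))⁻¹ * 2 ≤ ((2:ℝ)^(f K))⁻¹ := by
        rw [inv_eq_one_div, inv_eq_one_div, div_mul_eq_mul_div, div_le_div_iff₀ p1 p2]
        nlinarith
      obtain ⟨ha1, ha2⟩ := h1; obtain ⟨hb1, hb2⟩ := h2
      nlinarith
  refine ⟨f K, eventually_atTop.mpr ⟨K, key⟩, ?_⟩
  have h2 : Tendsto (fun k => ((2:ℝ)^(f k))⁻¹) atTop (𝓝 (((2:ℝ)^(f K))⁻¹)) := by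
    apply Tendsto.congr' _ tendsto_const_nhds
    filter_upwards [eventually_atTop.mpr ⟨K, key⟩] with k hk
    rw [hk]
  exact tendsto_nhds_unique h h2


lemma mem_downset_iff {p : ℕ} (S : Finset (Fin p))
    (hdc : ∀ i j : Fin p, i ≤ j → j ∈ S → i ∈ S) (i : Fin p) :
    i ∈ S ↔ (i : ℕ) < S.card := by
  constructor
  · intro hi
    have hsub : Finset.Iic i ⊆ S := fun j hj => hdc j i (Finset.mem_Iic.mp hj) hi
    have := Finset.card_le_card hsub
    rw [Fin.card_Iic] at this
    omega
  · intro hi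
    by_contra hni
    have hsub : S ⊆ Finset.Iio i := by
      intro j hj
      rw [Finset.mem_Iio]
      by_contra hij
      exact hni (hdc i j (le_of_not_gt hij) hj)
    have := Finset.card_le_card hsub
    rw [Fin.card_Iio] at this
    omega

lemma rev_dir (p : ℕ) (hp : 1 ≤ p) (θ : Fin p → ℝ) (r : ℕ) (hr1 : 1 ≤ r) (hrp : r ≤ p)
    (t : Fin (r - 1) → ℕ) (ht : StrictAnti t) (htpos : ∀ i, 0 < t i)
    (hθ : ∀ i : Fin p,
            θ i = if h : (i : ℕ) < r - 1
              then (2 : ℝ) ^ (t ⟨(i : ℕ), h⟩) / ((∑ j : Fin (r - 1), (2 : ℝ) ^ (t j)) + 1)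
              else if (i : ℕ) = r - 1
                then 1 / ((∑ j : Fin (r - 1), (2 : ℝ) ^ (t j)) + 1)
                else 0) : MemTheta θ := by
  set M : ℝ := (∑ j : Fin (r - 1), (2 : ℝ) ^ (t j)) + 1 with hM
  have hMpos : 0 < M := by
    have : (0:ℝ) ≤ ∑ j : Fin (r - 1), (2 : ℝ) ^ (t j) :=
      Finset.sum_nonneg fun j _ => by positivity
    linarith
  -- the sequence
  refine ⟨fun k i => if h : (i : ℕ) < r - 1 then t ⟨(i:ℕ), h⟩ + k + p
    else if (i : ℕ) < r then k + p else p - 1 - (i:ℕ), ?_, ?_, ?_⟩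
  · -- StrictAnti
    intro k i j hij
    have hij' : (i:ℕ) < (j:ℕ) := hij
    have hjp : (j:ℕ) < p := j.isLt
    by_cases hj : (j:ℕ) < r - 1
    · have hi : (i:ℕ) < r - 1 := by omega
      simp only [hi, hj, dif_pos]
      have : t ⟨(j:ℕ), hj⟩ < t ⟨(i:ℕ), hi⟩ := ht (by exact hij')
      omega
    · by_cases hjr : (j:ℕ) < r
      · simp only [hj, hjr, dif_neg, if_pos, not_false_iff]
        have hi : (i:ℕ) < r - 1 := by omega
        simp only [hi, dif_pos]
        have := htpos ⟨(i:ℕ), hi⟩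
        omega
      · simp only [hj, hjr, dif_neg, if_neg, not_false_iff]
        by_cases hi : (i:ℕ) < r - 1
        · simp only [hi, dif_pos]; omega
        · simp only [hi, dif_neg, not_false_iff]
          by_cases hir : (i:ℕ) < r
          · simp only [hir, if_pos]; omega
          · simp only [hir, if_neg, not_false_iff]; omega
  · -- Tendsto atTop (ℕ)
    apply tendsto_atTop_mono (f := fun k => 2 ^ k)
    · intro k
      calc 2 ^ k ≤ 2 ^ (if h : ((⟨0, hp⟩ : Fin p) : ℕ) < r - 1
            then t ⟨((⟨0, hp⟩ : Fin p):ℕ), h⟩ + k + p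
            else if ((⟨0, hp⟩ : Fin p):ℕ) < r then k + p else p - 1 - ((⟨0, hp⟩ : Fin p):ℕ)) := by
            apply Nat.pow_le_pow_right (by norm_num)
            by_cases h : (0:ℕ) < r - 1
            · simp only [h, dif_pos]; omega
            · simp only [h, dif_neg, not_false_iff]
              have : (0:ℕ) < r := hr1
              simp only [this, if_pos]; omega
        _ ≤ _ := Finset.single_le_sum (f := fun i : Fin p => 2 ^ (if h : (i:ℕ) < r - 1
            then t ⟨(i:ℕ), h⟩ + k + p else if (i:ℕ) < r then k + p else p - 1 - (i:ℕ)))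
            (fun i _ => Nat.zero_le _) (Finset.mem_univ (⟨0, hp⟩ : Fin p))
    · exact tendsto_pow_atTop_atTop_of_one_lt (by norm_num)
  · -- limits
    intro i
    set mf : ℕ → Fin p → ℕ := fun k i => if h : (i : ℕ) < r - 1 then t ⟨(i:ℕ), h⟩ + k + p
      else if (i : ℕ) < r then k + p else p - 1 - (i:ℕ) with hmf
    set c : Fin p → ℝ := fun i => if h : (i : ℕ) < r - 1 then (2:ℝ) ^ (t ⟨(i:ℕ), h⟩ + p)
      else if (i : ℕ) < r then (2:ℝ)^p else 0 with hc
    have claimA : ∀ i : Fin p,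
        Tendsto (fun k => (2:ℝ) ^ (mf k i) / 2 ^ k) atTop (𝓝 (c i)) := by
      intro i
      by_cases h1 : (i:ℕ) < r - 1
      · refine Tendsto.congr (f₁ := fun _ => c i) (fun k => ?_) tendsto_const_nhds
        simp only [hmf, hc]
        rw [dif_pos h1, dif_pos h1, eq_div_iff (by positivity : ((2:ℝ)^k) ≠ 0), ← pow_add]
        congr 1
        omega
      · by_cases h2 : (i:ℕ) < r
        · refine Tendsto.congr (f₁ := fun _ => c i) (fun k => ?_) tendsto_const_nhds
          simp only [hmf, hc]
          rw [dif_neg h1, dif_neg h1, if_pos h2, if_pos h2,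
            eq_div_iff (by positivity : ((2:ℝ)^k) ≠ 0), ← pow_add]
          congr 1
          omega
        · have : (fun k => (2:ℝ) ^ (mf k i) / 2 ^ k)
              = (fun k => (2:ℝ) ^ (p - 1 - (i:ℕ)) * ((2:ℝ)⁻¹) ^ k) := by
            funext k
            simp only [hmf, h1, dif_neg, not_false_iff, h2, if_neg]
            rw [div_eq_mul_inv, inv_pow]
          rw [this]
          simp only [hc, h1, dif_neg, not_false_iff, h2, if_neg]
          have := tendsto_pow_atTop_nhds_zero_of_lt_one (by norm_num : (0:ℝ) ≤ 2⁻¹)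
            (by norm_num : (2:ℝ)⁻¹ < 1)
          have h3 := this.const_mul ((2:ℝ) ^ (p - 1 - (i:ℕ)))
          simpa using h3
    have hsumc : ∑ j : Fin p, c j = M * 2 ^ p := by
      have e1 : ∑ j : Fin p, c j = ∑ n ∈ Finset.range p, (if h : n < r - 1
          then (2:ℝ) ^ (t ⟨n, h⟩ + p) else if n < r then (2:ℝ)^p else 0) := by
        rw [← Fin.sum_univ_eq_sum_range]
      rw [e1]
      have hsplit : Finset.range p = Finset.range r ∪ Finset.Ico r p := by
        rw [Finset.range_eq_Ico, ← Finset.Ico_union_Ico_eq_Ico (Nat.zero_le r) hrp, ← Finset.range_eq_Ico]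
      rw [hsplit, Finset.sum_union (by
        simp [Finset.disjoint_left, Finset.mem_Ico, Finset.mem_range]
        omega)]
      have e2 : ∑ n ∈ Finset.Ico r p, (if h : n < r - 1
          then (2:ℝ) ^ (t ⟨n, h⟩ + p) else if n < r then (2:ℝ)^p else 0) = 0 := by
        apply Finset.sum_eq_zero
        intro n hn
        rw [Finset.mem_Ico] at hn
        rw [dif_neg (by omega), if_neg (by omega)]
      rw [e2, add_zero]
      rw [show Finset.range r = Finset.range ((r-1)+1) from by rw [Nat.sub_add_cancel hr1],
        Finset.sum_range_succ]
      rw [dif_neg (by omega), if_pos (by omega)]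
      have e3 : ∑ n ∈ Finset.range (r-1), (if h : n < r - 1
          then (2:ℝ) ^ (t ⟨n, h⟩ + p) else if n < r then (2:ℝ)^p else 0)
          = ∑ j : Fin (r-1), (2:ℝ) ^ ((t j) + p) := by
        rw [← Fin.sum_univ_eq_sum_range (fun n => if h : n < r - 1
          then (2:ℝ) ^ (t ⟨n, h⟩ + p) else if n < r then (2:ℝ)^p else 0)]
        apply Finset.sum_congr rfl
        intro j _
        rw [dif_pos j.isLt]
      rw [e3, hM]
      simp only [pow_add]
      rw [← Finset.sum_mul]
      ring
    have claimB : Tendsto (fun k => (∑ j : Fin p, (2:ℝ) ^ (mf k j)) / 2 ^ k) atTop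
        (𝓝 (M * 2 ^ p)) := by
      have : (fun k => (∑ j : Fin p, (2:ℝ) ^ (mf k j)) / 2 ^ k)
          = fun k => ∑ j : Fin p, (2:ℝ) ^ (mf k j) / 2 ^ k := by
        funext k; rw [Finset.sum_div]
      rw [this, ← hsumc]
      exact tendsto_finset_sum _ fun j _ => claimA j
    have hSpos : ∀ k, (0:ℝ) < ∑ j : Fin p, (2:ℝ) ^ (mf k j) := by
      intro k
      apply Finset.sum_pos (fun j _ => by positivity)
      exact ⟨⟨0, hp⟩, Finset.mem_univ _⟩
    have hMp : M * (2:ℝ) ^ p ≠ 0 := by positivity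
    have main : Tendsto (fun k => (2:ℝ) ^ (mf k i) / ∑ j : Fin p, (2:ℝ) ^ (mf k j)) atTop
        (𝓝 (c i / (M * 2 ^ p))) := by
      have : (fun k => (2:ℝ) ^ (mf k i) / ∑ j : Fin p, (2:ℝ) ^ (mf k j))
          = fun k => ((2:ℝ) ^ (mf k i) / 2 ^ k) / ((∑ j : Fin p, (2:ℝ) ^ (mf k j)) / 2 ^ k) := by
        funext k
        rw [div_div_div_cancel_right₀]
        positivity
      rw [this]
      exact (claimA i).div claimB hMp
    have hθi : θ i = c i / (M * 2 ^ p) := by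
      rw [hθ i]
      by_cases h1 : (i:ℕ) < r - 1
      · rw [dif_pos h1]
        have hci : c i = (2:ℝ) ^ (t ⟨(i:ℕ), h1⟩ + p) := by
          simp only [hc]; rw [dif_pos h1]
        rw [hci, pow_add, div_eq_div_iff (ne_of_gt hMpos) hMp]
        ring
      · rw [dif_neg h1]
        by_cases h2 : (i:ℕ) = r - 1
        · rw [if_pos h2]
          have hci : c i = (2:ℝ) ^ p := by
            simp only [hc]; rw [dif_neg h1, if_pos (by omega)]
          rw [hci, div_eq_div_iff (ne_of_gt hMpos) hMp]
          ring
        · rw [if_neg h2]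
          have hci : c i = 0 := by
            simp only [hc]; rw [dif_neg h1, if_neg (by omega)]
          rw [hci, zero_div]
    rw [hθi]
    exact main

lemma fwd_dir (p : ℕ) (hp : 1 ≤ p) (θ : Fin p → ℝ) (h : MemTheta θ) :
    ∃ r : ℕ, 1 ≤ r ∧ r ≤ p ∧
      ∃ t : Fin (r - 1) → ℕ, StrictAnti t ∧ (∀ i, 0 < t i) ∧
        ∀ i : Fin p,
          θ i = if h : (i : ℕ) < r - 1
            then (2 : ℝ) ^ (t ⟨(i : ℕ), h⟩) / ((∑ j : Fin (r - 1), (2 : ℝ) ^ (t j)) + 1)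
            else if (i : ℕ) = r - 1
              then 1 / ((∑ j : Fin (r - 1), (2 : ℝ) ^ (t j)) + 1)
              else 0 := by
  obtain ⟨m, hanti, _htop, hlim⟩ := h
  set i0 : Fin p := ⟨0, hp⟩ with hi0
  set S : ℕ → ℝ := fun k => ∑ j : Fin p, (2:ℝ) ^ (m k j) with hSdef
  have hS : ∀ k, 0 < S k := fun k =>
    Finset.sum_pos (fun j _ => by positivity) ⟨i0, Finset.mem_univ _⟩
  have hmle : ∀ k (i j : Fin p), i ≤ j → m k j ≤ m k i := fun k i j hij =>
    (hanti k).antitone hij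
  have hsum1 : ∑ i : Fin p, θ i = 1 := by
    have h1 : Tendsto (fun k => ∑ i : Fin p, (2:ℝ) ^ (m k i) / S k) atTop
        (𝓝 (∑ i : Fin p, θ i)) := tendsto_finset_sum _ fun i _ => hlim i
    have h2 : (fun k => ∑ i : Fin p, (2:ℝ) ^ (m k i) / S k) = fun _ => (1:ℝ) := by
      funext k
      rw [← Finset.sum_div, div_self (hS k).ne']
    rw [h2] at h1
    exact tendsto_nhds_unique h1 tendsto_const_nhds
  have hnn : ∀ i, 0 ≤ θ i := fun i =>
    ge_of_tendsto' (hlim i) fun k => by positivity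
  have hmono : ∀ i j : Fin p, i ≤ j → θ j ≤ θ i := by
    intro i j hij
    refine le_of_tendsto_of_tendsto' (hlim j) (hlim i) fun k => ?_
    have hnum : (2:ℝ) ^ (m k j) ≤ 2 ^ (m k i) :=
      pow_le_pow_right₀ (by norm_num) (hmle k i j hij)
    have hpos := (hS k).le
    gcongr
  have hθ0 : (1:ℝ)/p ≤ θ i0 := by
    refine ge_of_tendsto' (hlim i0) fun k => ?_
    rw [div_le_div_iff₀ (by positivity) (hS k)]
    have : S k ≤ p * 2 ^ (m k i0) := by
      calc S k ≤ ∑ _j : Fin p, (2:ℝ) ^ (m k i0) :=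
            Finset.sum_le_sum fun j _ => by
              apply pow_le_pow_right₀ (by norm_num)
              exact hmle k i0 j (Fin.mk_le_of_le_val (Nat.zero_le _))
        _ = p * 2 ^ (m k i0) := by
            rw [Finset.sum_const, Finset.card_univ, Fintype.card_fin, nsmul_eq_mul]
    linarith
  have hθ0pos : 0 < θ i0 := lt_of_lt_of_le (by positivity) hθ0
  set P : Finset (Fin p) := Finset.univ.filter (fun i => 0 < θ i) with hPdef
  set r : ℕ := P.card with hrdef
  have hPmem : ∀ i : Fin p, 0 < θ i ↔ (i:ℕ) < r := by
    intro i
    rw [← mem_downset_iff P (fun i j hij hj => by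
      rw [hPdef, Finset.mem_filter] at *
      exact ⟨Finset.mem_univ _, lt_of_lt_of_le hj.2 (hmono i j hij)⟩) i]
    simp [hPdef]
  have hzero : ∀ j : Fin p, ¬ (j:ℕ) < r → θ j = 0 := fun j hj =>
    le_antisymm (not_lt.mp fun hpos => hj ((hPmem j).mp hpos)) (hnn j)
  have hr1 : 1 ≤ r := by
    have : (i0:ℕ) < r := (hPmem i0).mp hθ0pos
    omega
  have hrp : r ≤ p := le_trans (Finset.card_filter_le _ _) (by simp)
  have key : ∀ i : Fin p, 0 < θ i →
      ∃ a : ℕ, (∀ᶠ k in atTop, m k i0 - m k i = a) ∧ θ i / θ i0 = ((2:ℝ)^a)⁻¹ := by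
    intro i hi
    have hle : ∀ k, m k i ≤ m k i0 := fun k => hmle k i0 i (Fin.mk_le_of_le_val (Nat.zero_le _))
    have ht : Tendsto (fun k => ((2:ℝ)^(m k i0 - m k i))⁻¹) atTop (𝓝 (θ i / θ i0)) := by
      have h1 : (fun k => ((2:ℝ)^(m k i0 - m k i))⁻¹)
          = fun k => ((2:ℝ) ^ (m k i) / S k) / ((2:ℝ) ^ (m k i0) / S k) := by
        funext k
        rw [div_div_div_cancel_right₀ (hS k).ne',
          pow_sub₀ (2:ℝ) (by norm_num) (hle k), mul_inv, inv_inv]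
        rw [div_eq_mul_inv, mul_comm]
      rw [h1]
      exact (hlim i).div (hlim i0) hθ0pos.ne'
    exact eventually_const_of_tendsto_pow _ _ (div_pos hi hθ0pos) ht
  choose! A hAev hAval using key
  have hAmono : ∀ i j : Fin p, i < j → 0 < θ j → A i < A j := by
    intro i j hij hj
    have hi : 0 < θ i := lt_of_lt_of_le hj (hmono i j (le_of_lt hij))
    obtain ⟨k, h1, h2⟩ := ((hAev i hi).and (hAev j hj)).exists
    have h3 : m k j < m k i := hanti k hij
    have h4 : m k i ≤ m k i0 := hmle k i0 i (Fin.mk_le_of_le_val (Nat.zero_le _))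
    omega
  set ir : Fin p := ⟨r - 1, by omega⟩ with hir
  have hirpos : 0 < θ ir := (hPmem ir).mpr (show r - 1 < r by omega)
  set t : Fin (r-1) → ℕ := fun i => A ir - A ⟨(i:ℕ), by omega⟩ with htdef
  have hembA : ∀ i : Fin (r-1), A (⟨(i:ℕ), by omega⟩ : Fin p) < A ir := by
    intro i
    apply hAmono _ _ _ hirpos
    rw [Fin.lt_def]
    exact i.isLt
  have hθval : ∀ i : Fin p, 0 < θ i → θ i = θ i0 * ((2:ℝ)^(A i))⁻¹ := by
    intro i hi
    have hv := hAval i hi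
    rw [div_eq_iff hθ0pos.ne'] at hv
    rw [hv]; ring
  refine ⟨r, hr1, hrp, t, ?_, ?_, ?_⟩
  · intro i j hij
    have h1 : A (⟨(i:ℕ), by omega⟩ : Fin p) < A ⟨(j:ℕ), by omega⟩ := by
      apply hAmono
      · rw [Fin.lt_def]; exact hij
      · exact (hPmem _).mpr (show (j:ℕ) < r by have := j.isLt; omega)
    have h2 := hembA j
    simp only [htdef]
    omega
  · intro i
    have := hembA i
    simp only [htdef]
    omega
  · intro i
    set D : ℝ := (∑ j : Fin (r - 1), (2 : ℝ) ^ (t j)) + 1 with hD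
    have hDpos : 0 < D := by
      have : (0:ℝ) ≤ ∑ j : Fin (r - 1), (2 : ℝ) ^ (t j) :=
        Finset.sum_nonneg fun j _ => by positivity
      linarith
    have hθir : θ ir = θ i0 * ((2:ℝ)^(A ir))⁻¹ := hθval ir hirpos
    -- central identity
    have hcentral : θ i0 * ((2:ℝ)^(A ir))⁻¹ * D = 1 := by
      set F : ℕ → ℝ := fun n => if h : n < p then θ ⟨n, h⟩ else 0 with hF
      have e0 : ∑ j : Fin p, θ j = ∑ n ∈ Finset.range p, F n := by
        rw [← Fin.sum_univ_eq_sum_range]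
        refine Finset.sum_congr rfl fun j _ => ?_
        simp only [hF]
        rw [dif_pos j.isLt]
      have e1 : ∑ n ∈ Finset.Ico r p, F n = 0 := by
        refine Finset.sum_eq_zero fun n hn => ?_
        rw [Finset.mem_Ico] at hn
        simp only [hF]
        rw [dif_pos hn.2]
        exact hzero ⟨n, hn.2⟩ (by simp; omega)
      have hsplit : ∑ n ∈ Finset.range p, F n
          = ∑ n ∈ Finset.range (r-1), F n + F (r-1) := by
        rw [Finset.range_eq_Ico, ← Finset.Ico_union_Ico_eq_Ico (Nat.zero_le r) hrp,
          Finset.sum_union (by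
            simp [Finset.disjoint_left, Finset.mem_Ico]
            omega), e1, add_zero, ← Finset.range_eq_Ico,
          show Finset.range r = Finset.range ((r-1)+1) from by rw [Nat.sub_add_cancel hr1],
          Finset.sum_range_succ]
      have eF : F (r-1) = θ ir := by
        simp only [hF]
        rw [dif_pos (show r - 1 < p by omega)]
      have e2 : ∑ n ∈ Finset.range (r-1), F n = ∑ j : Fin (r-1), θ ⟨(j:ℕ), by omega⟩ := by
        rw [← Fin.sum_univ_eq_sum_range F (r-1)]
        refine Finset.sum_congr rfl fun j _ => ?_
        simp only [hF]
        rw [dif_pos (show (j:ℕ) < p by have := j.isLt; omega)]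
      have e3 : ∀ j : Fin (r-1),
          θ (⟨(j:ℕ), by omega⟩ : Fin p) = θ i0 * ((2:ℝ)^(A ir))⁻¹ * 2^(t j) := by
        intro j
        have hjpos : 0 < θ (⟨(j:ℕ), by omega⟩ : Fin p) :=
          (hPmem _).mpr (show (j:ℕ) < r by have := j.isLt; omega)
        rw [hθval _ hjpos]
        simp only [htdef]
        rw [pow_sub₀ (2:ℝ) (by norm_num) (le_of_lt (hembA j))]
        have h2a : ((2:ℝ)^(A ir))⁻¹ * (2:ℝ)^(A ir) = 1 := inv_mul_cancel₀ (by positivity)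
        calc θ i0 * ((2:ℝ)^(A (⟨(j:ℕ), by omega⟩ : Fin p)))⁻¹
            = θ i0 * (((2:ℝ)^(A ir))⁻¹ * (2:ℝ)^(A ir))
              * ((2:ℝ)^(A (⟨(j:ℕ), by omega⟩ : Fin p)))⁻¹ := by rw [h2a]; ring
          _ = _ := by ring
      have hfin : θ i0 * ((2:ℝ)^(A ir))⁻¹ * D = ∑ j : Fin p, θ j := by
        rw [hD, mul_add, mul_one, Finset.mul_sum, e0, hsplit, eF, e2]
        congr 1
        · exact Finset.sum_congr rfl fun j _ => (e3 j).symm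
        · exact hθir.symm
      rw [hfin, hsum1]
    have hbase : θ i0 * ((2:ℝ)^(A ir))⁻¹ = 1 / D := by
      rw [eq_div_iff hDpos.ne']
      exact hcentral
    by_cases h1 : (i:ℕ) < r - 1
    · rw [dif_pos h1]
      have hipos : 0 < θ i := (hPmem i).mpr (by omega)
      have hAlt : A i < A ir := hAmono i ir (by rw [Fin.lt_def]; exact h1) hirpos
      have hti : t ⟨(i:ℕ), h1⟩ = A ir - A i := by
        simp only [htdef]
      rw [hθval i hipos, hti]
      rw [pow_sub₀ (2:ℝ) (by norm_num) (le_of_lt hAlt)]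
      rw [eq_div_iff hDpos.ne']
      calc θ i0 * ((2:ℝ)^(A i))⁻¹ * D
          = (θ i0 * ((2:ℝ)^(A ir))⁻¹ * D) * ((2:ℝ) ^ (A ir) * ((2:ℝ)^(A i))⁻¹) := by
            have h2a : ((2:ℝ)^(A ir))⁻¹ * (2:ℝ)^(A ir) = 1 := inv_mul_cancel₀ (by positivity)
            calc θ i0 * ((2:ℝ)^(A i))⁻¹ * D
                = θ i0 * (((2:ℝ)^(A ir))⁻¹ * (2:ℝ)^(A ir)) * ((2:ℝ)^(A i))⁻¹ * D := by
                  rw [h2a]; ring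
              _ = _ := by ring
        _ = _ := by rw [hcentral]; ring
    · rw [dif_neg h1]
      by_cases h2 : (i:ℕ) = r - 1
      · rw [if_pos h2]
        have : i = ir := Fin.ext (by rw [hir]; exact h2)
        rw [this, hθir, hbase]
      · rw [if_neg h2]
        exact hzero i (by omega)

theorem theta_characterization (p : ℕ) (hp : 1 ≤ p) (θ : Fin p → ℝ) :
    MemTheta θ ↔
      ∃ r : ℕ, 1 ≤ r ∧ r ≤ p ∧
        ∃ t : Fin (r - 1) → ℕ, StrictAnti t ∧ (∀ i, 0 < t i) ∧
          ∀ i : Fin p,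
            θ i = if h : (i : ℕ) < r - 1
              then (2 : ℝ) ^ (t ⟨(i : ℕ), h⟩) / ((∑ j : Fin (r - 1), (2 : ℝ) ^ (t j)) + 1)
              else if (i : ℕ) = r - 1
                then 1 / ((∑ j : Fin (r - 1), (2 : ℝ) ^ (t j)) + 1)
                else 0 := by
  constructor
  · exact fwd_dir p hp θ
  · rintro ⟨r, hr1, hrp, t, ht, htpos, hθ⟩
    exact rev_dir p hp θ r hr1 hrp t ht htpos hθ
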